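/- Let h be a real number, let v = (x_v, h+1), q_l = (x_l, h), q = (x_q, h), q_r = (x_r, h) be points of ℝ² with x_l < x_q < x_r, and let p be a point of ℝ² with second coordinate at least h+1. Then the closed segment from q to p intersects the union of the closed segment from v to q_l and the closed segment from v to q_r. -/

import Mathlib

/-- the tent obstruction: if `v = (x_v, h+1)` and
`q_l = (x_l, h)`, `q = (x_q, h)`, `q_r = (x_r, h)` with `x_l < x_q < x_r`, then
for any point `p` of second coordinate at least `h + 1`, the closed segment
from `q` to `p` meets the union of the closed segments from `v` to `q_l` and
from `v` to `q_r`. -/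
theorem tent_obstruction (h xv xl xq xr : ℝ) (hlq : xl < xq) (hqr : xq < xr)
    (p : ℝ × ℝ) (hp : h + 1 ≤ p.2) :
    (segment ℝ ((xq, h) : ℝ × ℝ) p ∩
      (segment ℝ ((xv, h + 1) : ℝ × ℝ) ((xl, h) : ℝ × ℝ) ∪
       segment ℝ ((xv, h + 1) : ℝ × ℝ) ((xr, h) : ℝ × ℝ))).Nonempty := by
  set d : ℝ := p.2 - h with hd
  have hd1 : (1 : ℝ) ≤ d := by simp [hd]; linarith
  have hdpos : (0 : ℝ) < d := by linarith
  set t₁ : ℝ := 1 / d with ht₁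
  have ht₁0 : 0 < t₁ := by positivity
  have ht₁1 : t₁ ≤ 1 := by rw [ht₁, div_le_one hdpos]; linarith
  have ht₁d : t₁ * d = 1 := by rw [ht₁, one_div, inv_mul_cancel₀ hdpos.ne']
  -- x-coordinate of the point of segment q p at parameter t
  set X : ℝ → ℝ := fun t => (1 - t) * xq + t * p.1 with hX
  -- signed distances to the two tent edges at matching height
  set F : ℝ → ℝ := fun t => X t - (t * d * xv + (1 - t * d) * xl) with hF
  set G : ℝ → ℝ := fun t => (t * d * xv + (1 - t * d) * xr) - X t with hG
  have hFcont : ContinuousOn F (Set.Icc 0 t₁) := by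
    apply Continuous.continuousOn; rw [hF, hX]; fun_prop
  have hGcont : ContinuousOn G (Set.Icc 0 t₁) := by
    apply Continuous.continuousOn; rw [hG, hX]; fun_prop
  have hF0 : F 0 = xq - xl := by simp [hF, hX]
  have hG0 : G 0 = xr - xq := by simp [hG, hX]
  have hFG1 : G t₁ = -F t₁ := by
    simp only [hG, hF]; linear_combination (xl - xr) * ht₁d
  -- a helper: given t₀ with t₀ ∈ [0, t₁] where F (resp. G) vanishes,
  -- build the intersection point.
  have key : ∀ t₀ ∈ Set.Icc (0:ℝ) t₁, ∀ xe : ℝ,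
      X t₀ = t₀ * d * xv + (1 - t₀ * d) * xe →
      ((X t₀, h + t₀ * d) : ℝ × ℝ) ∈ segment ℝ ((xq, h) : ℝ × ℝ) p ∧
      ((X t₀, h + t₀ * d) : ℝ × ℝ) ∈
        segment ℝ ((xv, h + 1) : ℝ × ℝ) ((xe, h) : ℝ × ℝ) := by
    intro t₀ ht₀ xe hxe
    obtain ⟨ht₀0, ht₀1⟩ := ht₀
    have ht₀le1 : t₀ ≤ 1 := le_trans ht₀1 ht₁1
    have htd0 : 0 ≤ t₀ * d := by positivity
    have htd1 : t₀ * d ≤ 1 := by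
      calc t₀ * d ≤ t₁ * d := by nlinarith
        _ = 1 := ht₁d
    constructor
    · refine ⟨1 - t₀, t₀, by linarith, ht₀0, by ring, ?_⟩
      apply Prod.ext
      · simp [hX, smul_eq_mul]
      · simp [smul_eq_mul]; rw [hd]; ring
    · refine ⟨t₀ * d, 1 - t₀ * d, htd0, by linarith, by ring, ?_⟩
      apply Prod.ext
      · simp [smul_eq_mul]; linarith [hxe]
      · simp [smul_eq_mul]; ring
  by_cases hc : F t₁ ≤ 0
  · -- F crosses zero: hit the left edge
    have : (0:ℝ) ∈ Set.Icc (F t₁) (F 0) := ⟨hc, by rw [hF0]; linarith⟩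
    obtain ⟨t₀, ht₀, hFt₀⟩ := intermediate_value_Icc' (le_of_lt ht₁0) hFcont this
    have hxe : X t₀ = t₀ * d * xv + (1 - t₀ * d) * xl := by
      have := hFt₀; simp [hF] at this; linarith
    obtain ⟨h1, h2⟩ := key t₀ ht₀ xl hxe
    exact ⟨_, h1, Or.inl h2⟩
  · -- G crosses zero: hit the right edge
    have hGt₁ : G t₁ ≤ 0 := by rw [hFG1]; linarith
    have : (0:ℝ) ∈ Set.Icc (G t₁) (G 0) := ⟨hGt₁, by rw [hG0]; linarith⟩
    obtain ⟨t₀, ht₀, hGt₀⟩ := intermediate_value_Icc' (le_of_lt ht₁0) hGcont this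
    have hxe : X t₀ = t₀ * d * xv + (1 - t₀ * d) * xr := by
      have := hGt₀; simp [hG] at this; linarith
    obtain ⟨h1, h2⟩ := key t₀ ht₀ xr hxe
    exact ⟨_, h1, Or.inr h2⟩
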